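/- Shattering effect of sparse percolation on bounded-degree graphs: let C > 0 and d ∈ ℕ be constants and let (b_n)_{n≥1} be a sequence of positive reals with b_n / log log n → ∞. For each n, let G_n be any graph on n vertices whose maximum degree is at most d, and perform independent bond percolation on G_n with connection probability p_n ≤ C·e^{−b_n} (each edge retained independently with probability p_n), yielding the random subgraph G'_n of retained edges. Then for all sufficiently large n, with probability at least 1 − n^{−1}, every connected component of G'_n has at most ⌊3·log n / b_n⌋ edges. -/

import Mathlib

open MeasureTheory ProbabilityTheory Filter Real
open scoped ENNReal NNReal

noncomputable section

instance matrixMeasurableSpace {m n α : Type*} [MeasurableSpace α] :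
    MeasurableSpace (Matrix m n α) :=
  inferInstanceAs (MeasurableSpace (m → n → α))

/-- The largest eigenvalue of a real square matrix: the supremum of its real eigenvalues. -/
def lam1 {n : ℕ} (M : Matrix (Fin n) (Fin n) ℝ) : ℝ :=
  sSup {r : ℝ | ∃ v : Fin n → ℝ, v ≠ 0 ∧ M.mulVec v = r • v}

open Classical in
/-- The sum of `f i j` over the undirected edges `{i, j}` of `G`
(assuming `f` is symmetric, each undirected edge is counted once). -/
def edgeSum {m : ℕ} (G : SimpleGraph (Fin m)) (f : Fin m → Fin m → ℝ) : ℝ :=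
  (∑ i, ∑ j, if G.Adj i j then f i j else 0) / 2

/-- The maximum degree of `G` is at most `d`. -/
def MaxDegLE {m : ℕ} (G : SimpleGraph (Fin m)) (d : ℕ) : Prop :=
  ∀ v, {w | G.Adj v w}.ncard ≤ d


section Aux
open SimpleGraph

variable {V : Type*} {H : SimpleGraph V}

lemma ivt_nat (f : ℕ → ℕ) (h0 : f 0 = 0) (hstep : ∀ i, f (i+1) ≤ f i + 1) :
    ∀ N m, m ≤ f N → ∃ i, f i = m := by
  intro N
  induction N with
  | zero => intro m hm; exact ⟨0, by omega⟩
  | succ N ih =>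
    intro m hm
    by_cases h : m ≤ f N
    · exact ih m h
    · exact ⟨N+1, by have := hstep N; omega⟩

lemma take_toFinset_card_succ_le {α : Type*} [DecidableEq α] (l : List α) (i : ℕ) :
    ((l.take (i+1)).toFinset.card ≤ (l.take i).toFinset.card + 1) := by
  rw [List.take_succ]
  cases h : l[i]? with
  | none => simp [h]
  | some a =>
    simp only [h, List.toFinset_append]
    refine le_trans (Finset.card_union_le _ _) ?_
    simp

lemma length_le_two_mul_toFinset_card {α : Type*} [DecidableEq α] (l : List α)
    (h : ∀ a, l.count a ≤ 2) : l.length ≤ 2 * l.toFinset.card := by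
  have h1 : l.length = Multiset.card (↑l : Multiset α) := by simp
  have h2 : l.toFinset = (↑l : Multiset α).toFinset := rfl
  rw [h1, h2, ← Multiset.toFinset_sum_count_eq]
  calc ∑ a ∈ (↑l : Multiset α).toFinset, (↑l : Multiset α).count a
      ≤ ∑ _a ∈ (↑l : Multiset α).toFinset, 2 :=
        Finset.sum_le_sum fun a _ => by simpa using h a
  _ = 2 * (↑l : Multiset α).toFinset.card := by rw [Finset.sum_const, smul_eq_mul, mul_comm]



/-- Take the first `n` steps of a walk. -/
def wtake {u v : V} : (w : H.Walk u v) → ℕ → Σ x, H.Walk u x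
  | SimpleGraph.Walk.nil, _ => ⟨u, SimpleGraph.Walk.nil⟩
  | SimpleGraph.Walk.cons _ _, 0 => ⟨u, SimpleGraph.Walk.nil⟩
  | SimpleGraph.Walk.cons h w, (n+1) => ⟨(wtake w n).1, SimpleGraph.Walk.cons h (wtake w n).2⟩

lemma wtake_edges {u v : V} (w : H.Walk u v) (n : ℕ) :
    (wtake w n).2.edges = w.edges.take n := by
  induction w generalizing n with
  | nil => simp [wtake]
  | cons h w ih =>
    cases n with
    | zero => simp [wtake]
    | succ n => simp [wtake, SimpleGraph.Walk.edges_cons, ih]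

lemma walk_edge_mem_comp [DecidableEq V] {v x : V} (w : H.Walk v x) {e : Sym2 V} (he : e ∈ w.edges) :
    e ∈ {e ∈ H.edgeSet | ∀ u ∈ e, H.Reachable v u} := by
  refine ⟨w.edges_subset_edgeSet he, ?_⟩
  induction e with
  | h a b =>
    intro u hu
    rcases Sym2.mem_iff.mp hu with rfl | rfl
    · exact ⟨w.takeUntil u (w.fst_mem_support_of_mem_edges he)⟩
    · exact ⟨w.takeUntil u (w.snd_mem_support_of_mem_edges he)⟩

lemma first_new_edge {v : V} (w : H.Walk v v) :
    ∀ {x z : V} (r : H.Walk x z), x ∈ w.support → (∃ f ∈ r.edges, f ∉ w.edges) →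
    ∃ (a b : V) (_ : H.Adj a b), a ∈ w.support ∧ s(a, b) ∉ w.edges := by
  intro x z r
  induction r with
  | nil => rintro _ ⟨f, hf, _⟩; simp at hf
  | @cons x c z h r ih =>
    intro hx hf
    by_cases hnew : s(x, c) ∈ w.edges
    · refine ih (w.snd_mem_support_of_mem_edges hnew) ?_
      rcases hf with ⟨f, hf1, hf2⟩
      rcases List.mem_cons.mp (by simpa [Walk.edges_cons] using hf1) with rfl | hf1'
      · exact absurd hnew hf2
      · exact ⟨f, hf1', hf2⟩
    · exact ⟨x, c, h, hx, hnew⟩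

lemma step_lemma' [DecidableEq V] {v : V} (w : H.Walk v v) (hmult : ∀ f, w.edges.count f ≤ 2)
    {e : Sym2 V} (he : e ∈ {e ∈ H.edgeSet | ∀ u ∈ e, H.Reachable v u})
    (hnew : e ∉ w.edges) :
    ∃ w' : H.Walk v v, (∀ f, w'.edges.count f ≤ 2) ∧
      w.edges.toFinset.card < w'.edges.toFinset.card := by
  -- produce a walk from v containing e
  obtain ⟨hedge, hreach⟩ := he
  induction e with
  | h a' b' =>
    have hadj : H.Adj a' b' := hedge
    have hra : H.Reachable v a' := hreach a' (Sym2.mem_mk_left a' b')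
    obtain ⟨pa⟩ := hra
    set r : H.Walk v b' := pa.concat hadj with hr
    have hmem : s(a', b') ∈ r.edges := by
      rw [hr, Walk.edges_concat]; simp
    obtain ⟨a, c, hac, haw, hnotw⟩ :=
      first_new_edge w r w.start_mem_support ⟨s(a', b'), hmem, hnew⟩
    -- surgery: insert a detour a → c → a at a
    set w1 := w.takeUntil a haw with hw1
    set w2 := w.dropUntil a haw with hw2
    set w' : H.Walk v v := w1.append (Walk.cons hac (Walk.cons hac.symm w2)) with hw'
    have hsplit : w1.edges ++ w2.edges = w.edges := by
      rw [hw1, hw2, ← Walk.edges_append, Walk.take_spec]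
    have hedges : w'.edges = w1.edges ++ s(a, c) :: s(a, c) :: w2.edges := by
      rw [hw', Walk.edges_append, Walk.edges_cons, Walk.edges_cons, Sym2.eq_swap]
    have hcount : ∀ f, w'.edges.count f ≤ 2 := by
      intro f
      have h1 : w.edges.count f ≤ 2 := hmult f
      rw [← hsplit, List.count_append] at h1
      rw [hedges, List.count_append]
      by_cases hfe : f = s(a, c)
      · subst hfe
        have h0 : w.edges.count (s(a,c)) = 0 := List.count_eq_zero_of_not_mem hnotw
        rw [← hsplit, List.count_append] at h0
        simp only [List.count_cons_self]
        omega
      · rw [List.count_cons_of_ne (Ne.symm hfe), List.count_cons_of_ne (Ne.symm hfe)]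
        omega
    refine ⟨w', hcount, ?_⟩
    have hts : w'.edges.toFinset = insert (s(a, c)) w.edges.toFinset := by
      ext g
      simp only [hedges, ← hsplit, List.toFinset_append, List.mem_toFinset,
        Finset.mem_insert, Finset.mem_union, List.mem_cons, List.mem_append]
      tauto
    rw [hts, Finset.card_insert_of_notMem (by simpa using hnotw)]
    omega

lemma grow_lemma [DecidableEq V] [Fintype V] (H : SimpleGraph V) (v : V) :
    ∀ k, k ≤ ({e ∈ H.edgeSet | ∀ u ∈ e, H.Reachable v u}).ncard →
    ∃ w : H.Walk v v, (∀ f, w.edges.count f ≤ 2) ∧ k ≤ w.edges.toFinset.card := by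
  intro k
  induction k with
  | zero => intro _; exact ⟨Walk.nil, by simp, Nat.zero_le _⟩
  | succ k ih =>
    intro hk
    obtain ⟨w, hmult, hcard⟩ := ih (Nat.le_of_succ_le hk)
    by_cases hbig : k + 1 ≤ w.edges.toFinset.card
    · exact ⟨w, hmult, hbig⟩
    · set S := {e ∈ H.edgeSet | ∀ u ∈ e, H.Reachable v u} with hS
      have hfin : S.Finite := Set.toFinite S
      have hsub : w.edges.toFinset ⊆ hfin.toFinset := by
        intro g hg
        rw [Set.Finite.mem_toFinset]
        exact walk_edge_mem_comp w (List.mem_toFinset.mp hg)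
      have hlt : w.edges.toFinset.card < hfin.toFinset.card := by
        rw [← Set.ncard_eq_toFinset_card S hfin]
        omega
      have hex : ∃ e ∈ hfin.toFinset, e ∉ w.edges.toFinset := by
        by_contra hcon
        push_neg at hcon
        exact absurd (Finset.card_le_card hcon) (by omega)
      obtain ⟨e, heS, hew⟩ := hex
      obtain ⟨w', hmult', hcard'⟩ :=
        step_lemma' w hmult (Set.Finite.mem_toFinset hfin |>.mp heS)
          (fun hc => hew (List.mem_toFinset.mpr hc))
      exact ⟨w', hmult', by omega⟩

lemma extraction [DecidableEq V] [Fintype V] (H : SimpleGraph V) (v : V) (m : ℕ)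
    (hm : m ≤ ({e ∈ H.edgeSet | ∀ u ∈ e, H.Reachable v u}).ncard) :
    ∃ (x : V) (q : H.Walk v x), q.length ≤ 2 * m ∧ q.edges.toFinset.card = m := by
  obtain ⟨w, hmult, hcard⟩ := grow_lemma H v m hm
  set f : ℕ → ℕ := fun i => (w.edges.take i).toFinset.card with hf
  have h0 : f 0 = 0 := by simp [hf]
  have hstep : ∀ i, f (i+1) ≤ f i + 1 := fun i => take_toFinset_card_succ_le w.edges i
  have hN : m ≤ f w.edges.length := by
    show m ≤ (w.edges.take w.edges.length).toFinset.card
    rw [List.take_length]; exact hcard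
  obtain ⟨i, hi⟩ := ivt_nat f h0 hstep w.edges.length m hN
  refine ⟨(wtake w i).1, (wtake w i).2, ?_, ?_⟩
  · have hedges := wtake_edges w i
    have hcnt : ∀ a, (w.edges.take i).count a ≤ 2 :=
      fun a => le_trans ((List.take_sublist i w.edges).count_le a) (hmult a)
    have hlen := length_le_two_mul_toFinset_card (w.edges.take i) hcnt
    have hi' : (w.edges.take i).toFinset.card = m := hi
    rw [← (wtake w i).2.length_edges, hedges]
    omega
  · rw [wtake_edges w i]; exact hi

end Aux

section Aux2
open SimpleGraph
variable {V : Type*} [DecidableEq V] [Fintype V]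

noncomputable def famC (G : SimpleGraph V) : ℕ → V → Finset (Finset (Sym2 V))
  | 0, _ => {∅}
  | (L+1), v => insert ∅ (((Set.toFinite {w | G.Adj v w}).toFinset).biUnion
      fun y => ((famC G L y).image (insert s(v, y))))

lemma famC_card (G : SimpleGraph V) (d : ℕ) (hdeg : ∀ v, {w | G.Adj v w}.ncard ≤ d) :
    ∀ L v, (famC G L v).card ≤ (d+1)^L := by
  intro L
  induction L with
  | zero => intro v; simp [famC]
  | succ L ih =>
    intro v
    calc (famC G (L+1) v).card
        ≤ _ + 1 := Finset.card_insert_le _ _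
      _ ≤ (∑ y ∈ (Set.toFinite {w | G.Adj v w}).toFinset,
            ((famC G L y).image (insert s(v, y))).card) + 1 := by
          exact Nat.add_le_add_right (Finset.card_biUnion_le) 1
      _ ≤ (∑ _y ∈ (Set.toFinite {w | G.Adj v w}).toFinset, (d+1)^L) + 1 := by
          refine Nat.add_le_add_right (Finset.sum_le_sum fun y _ => ?_) 1
          exact le_trans (Finset.card_image_le) (ih y)
      _ ≤ d * (d+1)^L + 1 := by
          rw [Finset.sum_const, smul_eq_mul]
          have : (Set.toFinite {w | G.Adj v w}).toFinset.card ≤ d := by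
            rw [← Set.ncard_eq_toFinset_card _ _]; exact hdeg v
          exact Nat.add_le_add_right (Nat.mul_le_mul_right _ this) 1
      _ ≤ (d+1)^(L+1) := by
          have h1 : 1 ≤ (d+1)^L := Nat.one_le_pow _ _ (Nat.succ_pos d)
          rw [pow_succ]
          nlinarith

lemma famC_mem (G : SimpleGraph V) :
    ∀ (L : ℕ) {v u : V} (q : G.Walk v u), q.length ≤ L → q.edges.toFinset ∈ famC G L v := by
  intro L
  induction L with
  | zero =>
    intro v u q hq
    cases q with
    | nil => simp [famC]
    | cons h q => simp at hq
  | succ L ih =>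
    intro v u q hq
    cases q with
    | nil => simp [famC]
    | @cons _ y _ h q =>
      rw [Walk.edges_cons, List.toFinset_cons]
      refine Finset.mem_insert_of_mem (Finset.mem_biUnion.mpr ⟨y, ?_, ?_⟩)
      · simp [Set.Finite.mem_toFinset, h]
      · exact Finset.mem_image_of_mem _ (ih q (by simpa [Walk.length_cons] using hq))

lemma famC_subset_edgeSet (G : SimpleGraph V) :
    ∀ (L : ℕ) (v : V), ∀ F ∈ famC G L v, ↑F ⊆ G.edgeSet := by
  intro L
  induction L with
  | zero => intro v F hF; simp [famC] at hF; simp [hF]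
  | succ L ih =>
    intro v F hF
    rcases Finset.mem_insert.mp hF with rfl | hF
    · simp
    · obtain ⟨y, hy, F', hF', rfl⟩ := by
        simpa [Finset.mem_biUnion, Finset.mem_image] using hF
      intro e he
      rcases Finset.mem_insert.mp (by exact_mod_cast he) with rfl | he'
      · exact (by simpa using hy : G.Adj v y)
      · exact ih y F' hF' he'

end Aux2

section Aux3
open SimpleGraph

lemma cyl_prob {Ωn : Type*} [MeasurableSpace Ωn] (Pn : Measure Ωn)
    {n : ℕ} (Gn : SimpleGraph (Fin n)) (G'n : Ωn → SimpleGraph (Fin n)) (pn : ℝ)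
    (hmarg : ∀ e ∈ Gn.edgeSet, Pn {ω | e ∈ (G'n ω).edgeSet} = ENNReal.ofReal pn)
    (hindep : iIndepFun
      (fun (e : Gn.edgeSet) (ω : Ωn) => (e.1 ∈ (G'n ω).edgeSet : Prop)) Pn)
    (F : Finset (Sym2 (Fin n))) (hF : ↑F ⊆ Gn.edgeSet) :
    Pn {ω | ∀ e ∈ F, e ∈ (G'n ω).edgeSet} = (ENNReal.ofReal pn) ^ F.card := by
  classical
  set F' : Finset Gn.edgeSet := F.attach.map
    ⟨fun e => ⟨e.1, hF e.2⟩, fun a b hab => Subtype.ext (by simpa using hab)⟩ with hF'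
  have hset : {ω | ∀ e ∈ F, e ∈ (G'n ω).edgeSet} =
      ⋂ i ∈ F', {ω | i.1 ∈ (G'n ω).edgeSet} := by
    ext ω
    simp only [Set.mem_setOf_eq, Set.mem_iInter, hF', Finset.mem_map, Finset.mem_attach,
      Function.Embedding.coeFn_mk]
    constructor
    · rintro h i ⟨e, -, rfl⟩; exact h e.1 e.2
    · intro h e he; exact h ⟨e, hF he⟩ ⟨⟨e, he⟩, trivial, rfl⟩
  have hmeas := hindep.meas_biInter (S := F')
    (s := fun i => {ω | i.1 ∈ (G'n ω).edgeSet}) (fun i _ => ⟨{x | x}, trivial, rfl⟩)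
  rw [hset, hmeas]
  have : ∀ i ∈ F', Pn {ω | i.1 ∈ (G'n ω).edgeSet} = ENNReal.ofReal pn :=
    fun i _ => hmarg i.1 i.2
  rw [Finset.prod_congr rfl this, Finset.prod_const]
  congr 1
  rw [hF', Finset.card_map, Finset.card_attach]

end Aux3

section Aux4

lemma asym_real (C : ℝ) (hC : 0 < C) (d : ℕ) (b : ℕ → ℝ) (hbpos : ∀ n, 0 < b n)
    (hbtop : Tendsto (fun n => b n / Real.log (Real.log n)) atTop atTop) :
    ∀ᶠ n : ℕ in atTop,
      (n : ℝ) * ((d : ℝ) + 1) ^ (2 * (⌊3 * Real.log n / b n⌋₊ + 1)) *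
        (C * Real.exp (-b n)) ^ (⌊3 * Real.log n / b n⌋₊ + 1) ≤ (n : ℝ)⁻¹ := by
  set D : ℝ := Real.log (d + 1) with hD
  set cp : ℝ := max 0 (Real.log C) with hcp
  set K : ℝ := 2 * D + cp with hK
  have hD0 : 0 ≤ D := Real.log_nonneg (le_add_of_nonneg_left d.cast_nonneg)
  have hcp0 : 0 ≤ cp := le_max_left _ _
  have hK0 : 0 ≤ K := by rw [hK]; linarith
  have hlogtop : Tendsto (fun n : ℕ => Real.log n) atTop atTop :=
    Real.tendsto_log_atTop.comp tendsto_natCast_atTop_atTop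
  have hloglogtop : Tendsto (fun n : ℕ => Real.log (Real.log n)) atTop atTop :=
    Real.tendsto_log_atTop.comp hlogtop
  have h1 : ∀ᶠ n : ℕ in atTop, max 1 (2 * K) ≤ Real.log n := hlogtop.eventually_ge_atTop _
  have h2 : ∀ᶠ n : ℕ in atTop, (1 : ℝ) ≤ Real.log (Real.log n) :=
    hloglogtop.eventually_ge_atTop _
  have h3 : ∀ᶠ n : ℕ in atTop, 6 * K ≤ b n / Real.log (Real.log n) :=
    hbtop.eventually_ge_atTop _
  have h4 : ∀ᶠ n : ℕ in atTop, (1 : ℕ) ≤ n := eventually_ge_atTop 1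
  filter_upwards [h1, h2, h3, h4] with n hL hll hrat hn1
  have hn0 : (0 : ℝ) < n := by exact_mod_cast hn1
  set L : ℝ := Real.log n with hLdef
  have hL1 : 1 ≤ L := le_trans (le_max_left _ _) hL
  have hKL : 2 * K ≤ L := le_trans (le_max_right _ _) hL
  have hb : 0 < b n := hbpos n
  have hb6K : 6 * K ≤ b n := by
    have : 6 * K * 1 ≤ (b n / Real.log (Real.log n)) * Real.log (Real.log n) :=
      mul_le_mul hrat hll (by norm_num) (le_trans (by positivity) hrat)
    rwa [mul_one, div_mul_cancel₀ _ (by linarith : Real.log (Real.log n) ≠ 0)] at this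
  set k : ℕ := ⌊3 * L / b n⌋₊ with hk
  set m : ℕ := k + 1 with hm
  have hmR1 : (1 : ℝ) ≤ (m : ℝ) := by exact_mod_cast Nat.one_le_iff_ne_zero.mpr (by omega)
  have hdivnn : 0 ≤ 3 * L / b n := by positivity
  have hmlb : 3 * L < (m : ℝ) * b n := by
    have := Nat.lt_floor_add_one (3 * L / b n)
    have hmc : (m : ℝ) = (k : ℝ) + 1 := by exact_mod_cast rfl
    rw [hmc]
    calc 3 * L = (3 * L / b n) * b n := by field_simp
    _ < ((k : ℝ) + 1) * b n := by
        apply mul_lt_mul_of_pos_right _ hb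
        exact_mod_cast this
  have hmub : (m : ℝ) * b n ≤ 3 * L + b n := by
    have hfl : (k : ℝ) ≤ 3 * L / b n := Nat.floor_le hdivnn
    have hmc : (m : ℝ) = (k : ℝ) + 1 := by exact_mod_cast rfl
    rw [hmc, add_mul, one_mul]
    have : (k : ℝ) * b n ≤ (3 * L / b n) * b n := mul_le_mul_of_nonneg_right hfl hb.le
    rw [div_mul_cancel₀ _ hb.ne'] at this
    linarith
  -- key: m * K ≤ L
  have hmK : (m : ℝ) * K ≤ L := by
    have h5 : K * ((m : ℝ) * b n) ≤ K * (3 * L + b n) :=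
      mul_le_mul_of_nonneg_left hmub hK0
    have h6 : 3 * K * L ≤ (b n / 2) * L := by nlinarith
    have h7 : K * b n ≤ (L / 2) * b n := by nlinarith
    nlinarith
  -- now take logs
  have hpos1 : (0 : ℝ) < (n : ℝ) * ((d : ℝ) + 1) ^ (2 * m) * (C * Real.exp (-b n)) ^ m := by
    positivity
  have hpos2 : (0 : ℝ) < (n : ℝ)⁻¹ := by positivity
  rw [← Real.log_le_log_iff hpos1 hpos2]
  rw [Real.log_mul (by positivity) (by positivity), Real.log_mul (by positivity) (by positivity),
    Real.log_pow, Real.log_pow, Real.log_mul hC.ne' (Real.exp_pos _).ne', Real.log_exp,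
    Real.log_inv]
  push_cast
  have hcle : Real.log C ≤ cp := le_max_right _ _
  have hmc : (0:ℝ) ≤ (m:ℝ) := by linarith
  -- goal: L + 2m*D + m*(log C - b) ≤ -L
  have hstep1 : (m : ℝ) * Real.log C ≤ (m : ℝ) * cp := mul_le_mul_of_nonneg_left hcle hmc
  have hkm : ((k : ℝ) + 1) = (m : ℝ) := by push_cast [hm]; ring
  rw [← hLdef, ← hD]
  have hexp : (m : ℝ) * K = 2 * ((m : ℝ) * D) + (m : ℝ) * cp := by rw [hK]; ring
  nlinarith [hmlb, hmK, hstep1, hexp]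

end Aux4

/-- **Shattering effect of sparse percolation on bounded-degree graphs**: after bond
percolation with retention probability `p n ≤ C e^(-b n)` on a graph of maximum degree at
most `d`, with probability at least `1 - n⁻¹` every connected component has at most
`⌊3 log n / b n⌋` edges. -/
theorem percolation_shattering
    (C : ℝ) (hC : 0 < C) (d : ℕ)
    (b : ℕ → ℝ) (hbpos : ∀ n, 0 < b n)
    (hbtop : Tendsto (fun n => b n / Real.log (Real.log n)) atTop atTop)
    (G : ∀ n : ℕ, SimpleGraph (Fin n)) (hdeg : ∀ n, MaxDegLE (G n) d)
    (p : ℕ → ℝ) (hp0 : ∀ n, 0 ≤ p n) (hp : ∀ n, p n ≤ C * Real.exp (-b n))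
    (Ω : ℕ → Type*) [∀ n, MeasurableSpace (Ω n)]
    (P : ∀ n, Measure (Ω n)) [∀ n, IsProbabilityMeasure (P n)]
    (G' : ∀ n, Ω n → SimpleGraph (Fin n))
    (hsub : ∀ n ω, G' n ω ≤ G n)
    (hmarg : ∀ n, ∀ e ∈ (G n).edgeSet,
      P n {ω | e ∈ (G' n ω).edgeSet} = ENNReal.ofReal (p n))
    (hindep : ∀ n, iIndepFun
      (fun (e : (G n).edgeSet) (ω : Ω n) => (e.1 ∈ (G' n ω).edgeSet : Prop)) (P n)) :
    ∀ᶠ n : ℕ in atTop,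
      1 - ((n : ℕ) : ℝ≥0∞)⁻¹ ≤
        P n {ω | ∀ v : Fin n,
          ({e ∈ (G' n ω).edgeSet | ∀ u ∈ e, (G' n ω).Reachable v u}).ncard ≤
            ⌊3 * Real.log n / b n⌋₊} := by
  classical
  filter_upwards [asym_real C hC d b hbpos hbtop, eventually_ge_atTop 1] with n hasn hn1
  set k := ⌊3 * Real.log n / b n⌋₊ with hk
  set m := k + 1 with hm
  set q : ℝ≥0∞ := ENNReal.ofReal (p n) with hq
  set good : Set (Ω n) := {ω | ∀ v : Fin n,
    ({e ∈ (G' n ω).edgeSet | ∀ u ∈ e, (G' n ω).Reachable v u}).ncard ≤ k} with hgood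
  set B : Fin n → Set (Ω n) := fun v =>
    {ω | ¬ (({e ∈ (G' n ω).edgeSet | ∀ u ∈ e, (G' n ω).Reachable v u}).ncard ≤ k)} with hB
  set bad : Set (Ω n) := ⋃ v : Fin n, B v with hbad
  -- step 1: per-vertex inclusion and bound
  have hBsub : ∀ v : Fin n, B v ⊆ ⋃ F ∈ (famC (G n) (2*m) v).filter (fun F => F.card = m),
      {ω | ∀ e ∈ F, e ∈ (G' n ω).edgeSet} := by
    intro v ω hω
    simp only [hB, Set.mem_setOf_eq, not_le] at hω
    have hm' : m ≤ ({e ∈ (G' n ω).edgeSet | ∀ u ∈ e, (G' n ω).Reachable v u}).ncard := hω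
    obtain ⟨x, qw, hlen, hcard⟩ := extraction (G' n ω) v m hm'
    have ht : ∀ e ∈ qw.edges, e ∈ (G n).edgeSet :=
      fun e he => (SimpleGraph.edgeSet_mono (hsub n ω)) (qw.edges_subset_edgeSet he)
    set qw' := qw.transfer (G n) ht with hqw'
    have hedges : qw'.edges = qw.edges := SimpleGraph.Walk.edges_transfer qw ht
    have hlen' : qw'.length ≤ 2 * m := by
      rw [hqw', SimpleGraph.Walk.length_transfer]; exact hlen
    refine Set.mem_iUnion₂.mpr ⟨qw'.edges.toFinset, ?_, ?_⟩
    · rw [Finset.mem_filter]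
      exact ⟨by simpa [hedges] using famC_mem (G n) (2*m) qw' hlen', by rw [hedges]; exact hcard⟩
    · intro e he
      exact qw.edges_subset_edgeSet (by simpa [hedges] using List.mem_toFinset.mp he)
  have hBbound : ∀ v : Fin n, P n (B v) ≤ ((d+1)^(2*m) : ℕ) * q^m := by
    intro v
    refine le_trans (measure_mono (hBsub v)) ?_
    refine le_trans (measure_biUnion_finset_le _ _) ?_
    have hone : ∀ F ∈ (famC (G n) (2*m) v).filter (fun F => F.card = m),
        P n {ω | ∀ e ∈ F, e ∈ (G' n ω).edgeSet} = q^m := by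
      intro F hF
      rw [Finset.mem_filter] at hF
      rw [cyl_prob (P n) (G n) (G' n) (p n) (hmarg n) (hindep n) F
        (famC_subset_edgeSet (G n) (2*m) v F hF.1), hF.2]
    rw [Finset.sum_congr rfl hone, Finset.sum_const, nsmul_eq_mul]
    refine mul_le_mul_left ?_ _
    have : ((famC (G n) (2*m) v).filter (fun F => F.card = m)).card ≤ (d+1)^(2*m) :=
      le_trans (Finset.card_le_card (Finset.filter_subset _ _)) (famC_card (G n) d (hdeg n) (2*m) v)
    exact_mod_cast Nat.cast_le.mpr this
  -- step 2: total bound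
  have hPbad : P n bad ≤ (n : ℝ≥0∞) * ((d+1)^(2*m) : ℕ) * q^m := by
    refine le_trans (measure_iUnion_le B) ?_
    rw [tsum_fintype]
    calc ∑ v : Fin n, P n (B v) ≤ ∑ _v : Fin n, ((d+1)^(2*m) : ℕ) * q^m :=
          Finset.sum_le_sum fun v _ => hBbound v
    _ = (n : ℝ≥0∞) * ((d+1)^(2*m) : ℕ) * q^m := by
        rw [Finset.sum_const, nsmul_eq_mul, Finset.card_univ, Fintype.card_fin, mul_assoc]
  -- step 3: numeric bound
  have hnum : (n : ℝ≥0∞) * ((d+1)^(2*m) : ℕ) * q^m ≤ ((n : ℕ) : ℝ≥0∞)⁻¹ := by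
    have hqle : q^m ≤ ENNReal.ofReal ((C * Real.exp (-b n))^m) := by
      rw [hq, ← ENNReal.ofReal_pow (hp0 n)]
      exact ENNReal.ofReal_le_ofReal (pow_le_pow_left₀ (hp0 n) (hp n) m)
    have hcast1 : ((n : ℕ) : ℝ≥0∞) = ENNReal.ofReal (n : ℝ) := by
      rw [ENNReal.ofReal_natCast]
    have hcast2 : (((d+1)^(2*m) : ℕ) : ℝ≥0∞) = ENNReal.ofReal (((d : ℝ)+1)^(2*m)) := by
      push_cast
      rw [ENNReal.ofReal_pow (by positivity)]
      congr 1
      rw [ENNReal.ofReal_add (by positivity) (by norm_num), ENNReal.ofReal_natCast,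
        ENNReal.ofReal_one]
    calc (n : ℝ≥0∞) * ((d+1)^(2*m) : ℕ) * q^m
        ≤ ENNReal.ofReal (n : ℝ) * ENNReal.ofReal (((d : ℝ)+1)^(2*m)) *
          ENNReal.ofReal ((C * Real.exp (-b n))^m) := by
          rw [← hcast1, ← hcast2]
          exact mul_le_mul_right hqle _
    _ = ENNReal.ofReal ((n : ℝ) * ((d : ℝ)+1)^(2*m) * (C * Real.exp (-b n))^m) := by
        rw [← ENNReal.ofReal_mul (by positivity), ← ENNReal.ofReal_mul (by positivity)]
    _ ≤ ENNReal.ofReal ((n : ℝ)⁻¹) := ENNReal.ofReal_le_ofReal hasn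
    _ = ((n : ℕ) : ℝ≥0∞)⁻¹ := by
        rw [ENNReal.ofReal_inv_of_pos (by exact_mod_cast hn1), ENNReal.ofReal_natCast]
  -- step 4: combine
  have hcover : (Set.univ : Set (Ω n)) ⊆ good ∪ bad := by
    intro ω _
    by_cases h : ∀ v : Fin n, ({e ∈ (G' n ω).edgeSet | ∀ u ∈ e, (G' n ω).Reachable v u}).ncard ≤ k
    · exact Or.inl h
    · push_neg at h
      obtain ⟨v, hv⟩ := h
      exact Or.inr (Set.mem_iUnion.mpr ⟨v, by simp [hB]; omega⟩)
  have hone : (1 : ℝ≥0∞) ≤ P n good + P n bad := by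
    calc (1 : ℝ≥0∞) = P n Set.univ := (measure_univ (μ := P n)).symm
    _ ≤ P n (good ∪ bad) := measure_mono hcover
    _ ≤ P n good + P n bad := measure_union_le _ _
  have hfinal : P n bad ≤ ((n : ℕ) : ℝ≥0∞)⁻¹ := le_trans hPbad hnum
  calc (1 : ℝ≥0∞) - ((n : ℕ) : ℝ≥0∞)⁻¹ ≤ 1 - P n bad := tsub_le_tsub_left hfinal 1
  _ ≤ P n good := by
      rw [tsub_le_iff_right]
      calc (1 : ℝ≥0∞) ≤ P n good + P n bad := hone
      _ = P n good + P n bad := rfl
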